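/- For every norm ⦀·⦀ on ℝ^d and every k ∈ {0,…,d}, the Capra biconjugate of the characteristic function δ_{L_k} of the level set L_k = {x ∈ ℝ^d : ℓ0(x) ≤ k} is the characteristic function of the set {x ∈ ℝ^d : ⦀x⦀_k = ⦀x⦀}: (δ_{L_k})^{¢¢'} = δ_{{x : ⦀x⦀_k = ⦀x⦀}}, with the convention that for k = 0 the coordinate-0 norm condition means x = 0 (i.e. B_0 = {0}). -/

import Mathlib

open scoped BigOperators

noncomputable section

/-- The Euclidean pairing `⟨x,y⟩ = ∑ i, x i * y i` on `Fin d → ℝ`. -/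
def dotp {d : ℕ} (x y : Fin d → ℝ) : ℝ := ∑ i, x i * y i

/-- The coordinate subspace `R_K` of vectors vanishing outside `K`. -/
def RK {d : ℕ} (K : Finset (Fin d)) : Set (Fin d → ℝ) := {x | ∀ j ∉ K, x j = 0}

/-- Orthogonal projection onto `R_K`. -/
def projK {d : ℕ} (K : Finset (Fin d)) (x : Fin d → ℝ) : Fin d → ℝ :=
  fun i => if i ∈ K then x i else 0

/-- The ℓ0 pseudonorm: number of nonzero components. -/
def ell0 {d : ℕ} (x : Fin d → ℝ) : ℕ := (Function.support x).ncard

/-- `N` is a norm on `ℝ^d`. -/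
structure IsNorm {d : ℕ} (N : (Fin d → ℝ) → ℝ) : Prop where
  eq_zero_iff : ∀ x, N x = 0 ↔ x = 0
  smul : ∀ (c : ℝ) (x : Fin d → ℝ), N (c • x) = |c| * N x
  triangle : ∀ x y, N (x + y) ≤ N x + N y

/-- `⦀y⦀_{K,★}`: the dual norm (w.r.t. the Euclidean pairing), on the subspace `R_K`,
of the restriction of `N` to `R_K`. -/
def restStar {d : ℕ} (N : (Fin d → ℝ) → ℝ) (K : Finset (Fin d)) (y : Fin d → ℝ) : ℝ :=
  sSup {r | ∃ x ∈ RK K, N x ≤ 1 ∧ r = dotp x y}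

/-- The dual coordinate-k norm `⦀y⦀_{k,★} = sup_{|K| ≤ k} ⦀y_K⦀_{K,★}`. -/
def dualCoord {d : ℕ} (N : (Fin d → ℝ) → ℝ) (k : ℕ) (y : Fin d → ℝ) : ℝ :=
  sSup {r | ∃ K : Finset (Fin d), K.card ≤ k ∧ r = restStar N K (projK K y)}

/-- The coordinate-k norm: the dual norm of the dual coordinate-k norm. -/
def coordNorm {d : ℕ} (N : (Fin d → ℝ) → ℝ) (k : ℕ) (x : Fin d → ℝ) : ℝ :=
  sSup {r | ∃ y : Fin d → ℝ, dualCoord N k y ≤ 1 ∧ r = dotp x y}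

/-- The Capra coupling `¢(x,y) = ⟨x,y⟩/⦀x⦀` (with `¢(0,y) = 0`). -/
def capra {d : ℕ} (N : (Fin d → ℝ) → ℝ) (x y : Fin d → ℝ) : ℝ :=
  if x = 0 then 0 else dotp x y / N x

/-- Capra conjugate `f^¢(y) = sup_x ( ¢(x,y) ∔ (−f(x)) )`.
(EReal addition is the Moreau lower addition: `⊤ + ⊥ = ⊥`.) -/
def capraConj {d : ℕ} (N : (Fin d → ℝ) → ℝ) (f : (Fin d → ℝ) → EReal)
    (y : Fin d → ℝ) : EReal :=
  ⨆ x : Fin d → ℝ, ((capra N x y : ℝ) : EReal) + (- f x)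

/-- Capra biconjugate `f^{¢¢'}(x) = sup_y ( ¢(x,y) ∔ (−f^¢(y)) )`. -/
def capraBiconj {d : ℕ} (N : (Fin d → ℝ) → ℝ) (f : (Fin d → ℝ) → EReal)
    (x : Fin d → ℝ) : EReal :=
  ⨆ y : Fin d → ℝ, ((capra N x y : ℝ) : EReal) + (- capraConj N f y)

/-- Fenchel conjugate `g^★(y) = sup_x ( ⟨x,y⟩ ∔ (−g(x)) )`. -/
def fenchelConj {d : ℕ} (g : (Fin d → ℝ) → EReal) (y : Fin d → ℝ) : EReal :=
  ⨆ x : Fin d → ℝ, ((dotp x y : ℝ) : EReal) + (- g x)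

open Classical in
/-- Characteristic function of a set: `0` on `C`, `+∞` outside. -/
def indic {d : ℕ} (C : Set (Fin d → ℝ)) : (Fin d → ℝ) → EReal :=
  fun x => if x ∈ C then 0 else ⊤

/-! ### Auxiliary lemmas -/

section Aux

variable {d : ℕ} {N : (Fin d → ℝ) → ℝ}

lemma dotp_zero_left (y : Fin d → ℝ) : dotp 0 y = 0 := by simp [dotp]

lemma dotp_zero_right (x : Fin d → ℝ) : dotp x 0 = 0 := by simp [dotp]

lemma dotp_smul_left (c : ℝ) (x y : Fin d → ℝ) : dotp (c • x) y = c * dotp x y := by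
  simp [dotp, Finset.mul_sum, mul_assoc]

lemma dotp_smul_right (c : ℝ) (x y : Fin d → ℝ) : dotp x (c • y) = c * dotp x y := by
  unfold dotp
  rw [Finset.mul_sum]
  exact Finset.sum_congr rfl fun i _ => by simp; ring

lemma projK_smul (K : Finset (Fin d)) (c : ℝ) (y : Fin d → ℝ) :
    projK K (c • y) = c • projK K y := by
  funext i; simp only [projK, Pi.smul_apply, smul_eq_mul]
  split <;> simp

lemma zero_mem_RK (K : Finset (Fin d)) : (0 : Fin d → ℝ) ∈ RK K := fun _ _ => rfl

lemma dotp_projK {K : Finset (Fin d)} {x : Fin d → ℝ} (hx : x ∈ RK K) (y : Fin d → ℝ) :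
    dotp x (projK K y) = dotp x y := by
  unfold dotp projK
  refine Finset.sum_congr rfl fun i _ => ?_
  by_cases hi : i ∈ K
  · simp [hi]
  · simp [hi, hx i hi]

lemma IsNorm.zero (hN : @IsNorm d N) : N 0 = 0 := (hN.eq_zero_iff 0).mpr rfl

lemma IsNorm.nonneg (hN : @IsNorm d N) (x : Fin d → ℝ) : 0 ≤ N x := by
  have h1 : N (x + (-1 : ℝ) • x) ≤ N x + N ((-1:ℝ) • x) := hN.triangle _ _
  have h2 : N ((-1:ℝ) • x) = N x := by rw [hN.smul]; simp
  have h3 : x + (-1:ℝ) • x = 0 := by simp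
  rw [h3, hN.zero, h2] at h1; linarith

lemma IsNorm.pos (hN : @IsNorm d N) {x : Fin d → ℝ} (hx : x ≠ 0) : 0 < N x := by
  rcases lt_or_eq_of_le (hN.nonneg x) with h | h
  · exact h
  · exact absurd ((hN.eq_zero_iff x).mp h.symm) hx

def WithN (d : ℕ) : Type := Fin d → ℝ

def IsNorm.toAddGroupNorm (hN : @IsNorm d N) : AddGroupNorm (Fin d → ℝ) where
  toFun := N
  map_zero' := hN.zero
  add_le' := hN.triangle
  neg' := fun x => by
    have := hN.smul (-1) x
    simpa using this
  eq_zero_of_map_eq_zero' := fun x hx => (hN.eq_zero_iff x).mp hx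

theorem IsNorm.exists_bound (hN : @IsNorm d N) :
    ∃ C > 0, ∀ (x : Fin d → ℝ) (i : Fin d), |x i| ≤ C * N x := by
  letI : AddCommGroup (WithN d) := (inferInstance : AddCommGroup (Fin d → ℝ))
  letI : Module ℝ (WithN d) := (inferInstance : Module ℝ (Fin d → ℝ))
  letI : NormedAddCommGroup (WithN d) := hN.toAddGroupNorm.toNormedAddCommGroup
  letI : NormedSpace ℝ (WithN d) := { norm_smul_le := fun c x => le_of_eq (hN.smul c x) }
  let eqv : (Fin d → ℝ) ≃ₗ[ℝ] (WithN d) := LinearEquiv.refl ℝ (Fin d → ℝ)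
  letI : FiniteDimensional ℝ (WithN d) := eqv.finiteDimensional
  let g : WithN d →L[ℝ] (Fin d → ℝ) := LinearMap.toContinuousLinearMap eqv.symm.toLinearMap
  have hnorm : ∀ z : WithN d, ‖z‖ = N z := fun _ => rfl
  refine ⟨‖g‖ + 1, by positivity, fun x i => ?_⟩
  have h1 := g.le_opNorm x
  rw [hnorm x] at h1
  have h3 : |x i| ≤ ‖g x‖ := by
    have := norm_le_pi_norm (g x) i
    exact this
  have h4 : ‖g‖ * N x ≤ (‖g‖ + 1) * N x :=
    mul_le_mul_of_nonneg_right (by linarith) (hN.nonneg x)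
  linarith

theorem IsNorm.exists_dual (hN : @IsNorm d N) (x : Fin d → ℝ) :
    ∃ y : Fin d → ℝ, dotp x y = N x ∧ ∀ z, dotp z y ≤ N z := by
  by_cases hx : x = 0
  · exact ⟨0, by simp [dotp, hx, hN.zero], fun z => by simpa [dotp] using hN.nonneg z⟩
  letI : AddCommGroup (WithN d) := (inferInstance : AddCommGroup (Fin d → ℝ))
  letI : Module ℝ (WithN d) := (inferInstance : Module ℝ (Fin d → ℝ))
  letI : NormedAddCommGroup (WithN d) := hN.toAddGroupNorm.toNormedAddCommGroup
  letI : NormedSpace ℝ (WithN d) := { norm_smul_le := fun c x => le_of_eq (hN.smul c x) }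
  obtain ⟨g, hg1, hgx⟩ := exists_dual_vector (E := WithN d) ℝ x (fun h => hx ((hN.eq_zero_iff x).mp h))
  have hnorm : ∀ z : WithN d, ‖z‖ = N z := fun _ => rfl
  set y : Fin d → ℝ := fun i => g (fun j => if i = j then 1 else 0) with hy
  have hrep : ∀ z : Fin d → ℝ, g z = dotp z y := by
    intro z
    have hz : (z : WithN d) = ∑ i, z i • (fun j => if i = j then (1:ℝ) else 0) :=
      pi_eq_sum_univ z
    show g z = ∑ i, z i * y i
    conv_lhs => rw [hz]
    refine (map_sum g (fun i => (z i • (fun j => if i = j then (1:ℝ) else 0) : WithN d)) Finset.univ).trans ?_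
    exact Finset.sum_congr rfl fun i _ => g.map_smul (z i) (fun j => if i = j then (1:ℝ) else 0 : WithN d)
  refine ⟨y, ?_, fun z => ?_⟩
  · rw [← hrep x]
    rw [RCLike.ofReal_real_eq_id] at hgx
    rw [id_eq] at hgx
    exact hgx.trans (hnorm x)
  · have h1 : g z ≤ ‖g z‖ := le_abs_self _
    have h2 := g.le_opNorm z
    rw [hg1, one_mul] at h2
    rw [← hrep z]
    exact le_trans h1 (h2.trans_eq (hnorm z))

/-! ### restStar -/

lemma restStar_set_nonempty (hN : @IsNorm d N) (K : Finset (Fin d)) (y : Fin d → ℝ) :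
    {r | ∃ x ∈ RK K, N x ≤ 1 ∧ r = dotp x y}.Nonempty := by
  exact ⟨0, 0, zero_mem_RK K, by rw [hN.zero]; norm_num, (dotp_zero_left y).symm⟩

lemma restStar_set_bddAbove (hN : @IsNorm d N) (K : Finset (Fin d)) (y : Fin d → ℝ) :
    BddAbove {r | ∃ x ∈ RK K, N x ≤ 1 ∧ r = dotp x y} := by
  obtain ⟨C, hC, hCb⟩ := hN.exists_bound
  refine ⟨C * ∑ i, |y i|, fun r hr => ?_⟩
  obtain ⟨x, _, hx1, rfl⟩ := hr
  calc dotp x y ≤ ∑ i, |x i| * |y i| := by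
        refine Finset.sum_le_sum fun i _ => ?_
        calc x i * y i ≤ |x i * y i| := le_abs_self _
        _ = |x i| * |y i| := abs_mul _ _
  _ ≤ ∑ i, C * |y i| := by
        refine Finset.sum_le_sum fun i _ => ?_
        refine mul_le_mul_of_nonneg_right ?_ (abs_nonneg _)
        calc |x i| ≤ C * N x := hCb x i
        _ ≤ C * 1 := mul_le_mul_of_nonneg_left hx1 hC.le
        _ = C := mul_one C
  _ = C * ∑ i, |y i| := by rw [Finset.mul_sum]

lemma le_restStar (hN : @IsNorm d N) {K : Finset (Fin d)} {y x : Fin d → ℝ}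
    (hx : x ∈ RK K) (hNx : N x ≤ 1) : dotp x y ≤ restStar N K y :=
  le_csSup (restStar_set_bddAbove hN K y) ⟨x, hx, hNx, rfl⟩

lemma restStar_le (hN : @IsNorm d N) {K : Finset (Fin d)} {y : Fin d → ℝ} {B : ℝ}
    (h : ∀ x ∈ RK K, N x ≤ 1 → dotp x y ≤ B) : restStar N K y ≤ B := by
  refine csSup_le (restStar_set_nonempty hN K y) fun r hr => ?_
  obtain ⟨x, hx, hx1, rfl⟩ := hr
  exact h x hx hx1

lemma restStar_nonneg (hN : @IsNorm d N) (K : Finset (Fin d)) (y : Fin d → ℝ) :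
    0 ≤ restStar N K y := by
  have := le_restStar hN (zero_mem_RK K) (y := y) (by rw [hN.zero]; norm_num)
  rwa [dotp_zero_left] at this

/-! ### dualCoord -/

lemma dualCoord_set_nonempty (k : ℕ) (y : Fin d → ℝ) :
    {r | ∃ K : Finset (Fin d), K.card ≤ k ∧ r = restStar N K (projK K y)}.Nonempty :=
  ⟨restStar N ∅ (projK ∅ y), ∅, by simp, rfl⟩

lemma dualCoord_set_bddAbove (k : ℕ) (y : Fin d → ℝ) :
    BddAbove {r | ∃ K : Finset (Fin d), K.card ≤ k ∧ r = restStar N K (projK K y)} := by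
  have hfin : {r | ∃ K : Finset (Fin d), K.card ≤ k ∧ r = restStar N K (projK K y)}.Finite := by
    apply Set.Finite.subset (Set.finite_range (fun K : Finset (Fin d) => restStar N K (projK K y)))
    rintro r ⟨K, _, rfl⟩
    exact ⟨K, rfl⟩
  exact hfin.bddAbove

lemma le_dualCoord (hN : @IsNorm d N) {k : ℕ} {K : Finset (Fin d)} (hK : K.card ≤ k)
    (y : Fin d → ℝ) : restStar N K (projK K y) ≤ dualCoord N k y :=
  le_csSup (dualCoord_set_bddAbove k y) ⟨K, hK, rfl⟩

lemma dualCoord_le (hN : @IsNorm d N) {k : ℕ} {y : Fin d → ℝ} {B : ℝ}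
    (h : ∀ K : Finset (Fin d), K.card ≤ k → restStar N K (projK K y) ≤ B) :
    dualCoord N k y ≤ B := by
  refine csSup_le (dualCoord_set_nonempty k y) fun r hr => ?_
  obtain ⟨K, hK, rfl⟩ := hr
  exact h K hK

lemma restStar_empty (hN : @IsNorm d N) (z : Fin d → ℝ) : restStar N ∅ z = 0 := by
  refine le_antisymm (restStar_le hN fun x hx _ => ?_) (restStar_nonneg hN ∅ z)
  have : x = 0 := funext fun j => hx j (Finset.notMem_empty j)
  rw [this, dotp_zero_left]

lemma dualCoord_nonneg (hN : @IsNorm d N) (k : ℕ) (y : Fin d → ℝ) : 0 ≤ dualCoord N k y := by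
  have := le_dualCoord hN (k := k) (K := ∅) (by simp) y
  rwa [restStar_empty hN] at this

lemma dualCoord_zero_right (hN : @IsNorm d N) (k : ℕ) : dualCoord N k 0 = 0 := by
  refine le_antisymm (dualCoord_le hN fun K _ => ?_) (dualCoord_nonneg hN k 0)
  refine restStar_le hN fun x hx hx1 => ?_
  have : projK K (0 : Fin d → ℝ) = 0 := by funext i; simp [projK]
  rw [this, dotp_zero_right]

lemma dualCoord_smul_le (hN : @IsNorm d N) {k : ℕ} {c : ℝ} (hc : 0 ≤ c) (y : Fin d → ℝ) :
    dualCoord N k (c • y) ≤ c * dualCoord N k y := by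
  refine dualCoord_le hN fun K hK => ?_
  rw [projK_smul]
  refine restStar_le hN fun x hx hx1 => ?_
  rw [dotp_smul_right]
  exact mul_le_mul_of_nonneg_left (le_trans (le_restStar hN hx hx1) (le_dualCoord hN hK y)) hc

lemma dotp_single (i : Fin d) (a : ℝ) (z : Fin d → ℝ) :
    dotp (Pi.single i a) z = a * z i := by
  unfold dotp
  rw [Finset.sum_eq_single i]
  · simp
  · intro j _ hj; simp [Pi.single_apply, hj]
  · intro h; exact absurd (Finset.mem_univ i) h

lemma abs_le_dualCoord (hN : @IsNorm d N) {k : ℕ} (hk : 1 ≤ k) (y : Fin d → ℝ) (i : Fin d) :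
    |y i| ≤ N (Pi.single i 1) * dualCoord N k y := by
  have hne : (Pi.single i 1 : Fin d → ℝ) ≠ 0 := by
    intro h
    have := congrFun h i
    simp at this
  have hpos : 0 < N (Pi.single i 1) := hN.pos hne
  set s : ℝ := if 0 ≤ y i then 1 else -1 with hs
  set u : Fin d → ℝ := (s / N (Pi.single i 1)) • (Pi.single i 1 : Fin d → ℝ) with hu
  have hu_mem : u ∈ RK {i} := by
    intro j hj
    have hji : j ≠ i := by simpa using hj
    simp [hu, Pi.single_apply, hji]
  have hs_abs : |s| = 1 := by rw [hs]; split <;> norm_num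
  have hNu : N u = 1 := by
    rw [hu, hN.smul, abs_div, hs_abs]
    rw [abs_of_pos hpos]
    field_simp
  have hdot : dotp u (projK {i} y) = |y i| / N (Pi.single i 1) := by
    rw [hu, dotp_smul_left, dotp_single]
    have hproj : projK {i} y i = y i := by simp [projK]
    rw [hproj]
    rw [hs]
    rcases le_or_gt 0 (y i) with h | h
    · rw [if_pos h, abs_of_nonneg h]; ring
    · rw [if_neg (not_le.mpr h), abs_of_neg h]; ring
  have h1 : |y i| / N (Pi.single i 1) ≤ dualCoord N k y := by
    rw [← hdot]
    exact le_trans (le_restStar hN hu_mem hNu.le)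
      (le_dualCoord hN (by simpa using hk) y)
  calc |y i| = N (Pi.single i 1) * (|y i| / N (Pi.single i 1)) := by field_simp
  _ ≤ N (Pi.single i 1) * dualCoord N k y := mul_le_mul_of_nonneg_left h1 hpos.le

lemma eq_zero_of_dualCoord_eq_zero (hN : @IsNorm d N) {k : ℕ} (hk : 1 ≤ k) {y : Fin d → ℝ}
    (h : dualCoord N k y = 0) : y = 0 := by
  funext i
  have := abs_le_dualCoord hN hk y i
  rw [h, mul_zero] at this
  have := abs_nonneg (y i)
  have : |y i| = 0 := le_antisymm (by linarith) (abs_nonneg _)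
  simpa using this

/-! ### coordNorm -/

lemma coordNorm_set_nonempty (k : ℕ) (x : Fin d → ℝ) (hN : @IsNorm d N) :
    {r | ∃ y : Fin d → ℝ, dualCoord N k y ≤ 1 ∧ r = dotp x y}.Nonempty :=
  ⟨0, 0, by rw [dualCoord_zero_right hN]; norm_num, (dotp_zero_right x).symm⟩

lemma coordNorm_set_bddAbove (hN : @IsNorm d N) {k : ℕ} (hk : 1 ≤ k) (x : Fin d → ℝ) :
    BddAbove {r | ∃ y : Fin d → ℝ, dualCoord N k y ≤ 1 ∧ r = dotp x y} := by
  refine ⟨∑ i, |x i| * N (Pi.single i 1), fun r hr => ?_⟩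
  obtain ⟨y, hy1, rfl⟩ := hr
  calc dotp x y ≤ ∑ i, |x i| * |y i| := by
        refine Finset.sum_le_sum fun i _ => ?_
        calc x i * y i ≤ |x i * y i| := le_abs_self _
        _ = |x i| * |y i| := abs_mul _ _
  _ ≤ ∑ i, |x i| * N (Pi.single i 1) := by
        refine Finset.sum_le_sum fun i _ => ?_
        refine mul_le_mul_of_nonneg_left ?_ (abs_nonneg _)
        calc |y i| ≤ N (Pi.single i 1) * dualCoord N k y := abs_le_dualCoord hN hk y i
        _ ≤ N (Pi.single i 1) * 1 := mul_le_mul_of_nonneg_left hy1 (hN.nonneg _)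
        _ = N (Pi.single i 1) := mul_one _

lemma le_coordNorm (hN : @IsNorm d N) {k : ℕ} (hk : 1 ≤ k) {x y : Fin d → ℝ}
    (hy : dualCoord N k y ≤ 1) : dotp x y ≤ coordNorm N k x :=
  le_csSup (coordNorm_set_bddAbove hN hk x) ⟨y, hy, rfl⟩

lemma coordNorm_le (hN : @IsNorm d N) {k : ℕ} {x : Fin d → ℝ} {B : ℝ}
    (h : ∀ y : Fin d → ℝ, dualCoord N k y ≤ 1 → dotp x y ≤ B) : coordNorm N k x ≤ B := by
  refine csSup_le (coordNorm_set_nonempty k x hN) fun r hr => ?_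
  obtain ⟨y, hy, rfl⟩ := hr
  exact h y hy

lemma N_le_coordNorm (hN : @IsNorm d N) {k : ℕ} (hk : 1 ≤ k) (x : Fin d → ℝ) :
    N x ≤ coordNorm N k x := by
  obtain ⟨y, hxy, hy⟩ := hN.exists_dual x
  have hyd : dualCoord N k y ≤ 1 := by
    refine dualCoord_le hN fun K _ => ?_
    refine restStar_le hN fun z hz hz1 => ?_
    rw [dotp_projK hz]
    exact le_trans (hy z) hz1
  rw [← hxy]
  exact le_coordNorm hN hk hyd

lemma coordNorm_smul_le (hN : @IsNorm d N) {k : ℕ} (hk : 1 ≤ k) {c : ℝ} (hc : 0 ≤ c)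
    (x : Fin d → ℝ) : coordNorm N k (c • x) ≤ c * coordNorm N k x := by
  refine coordNorm_le hN fun y hy => ?_
  rw [dotp_smul_left]
  exact mul_le_mul_of_nonneg_left (le_coordNorm hN hk hy) hc

lemma coordNorm_zero (hN : @IsNorm d N) {k : ℕ} (hk : 1 ≤ k) :
    coordNorm N k (0 : Fin d → ℝ) = 0 := by
  refine le_antisymm (coordNorm_le hN fun y _ => by rw [dotp_zero_left]) ?_
  have := le_coordNorm hN hk (x := (0 : Fin d → ℝ))
    (y := 0) (by rw [dualCoord_zero_right hN]; norm_num)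
  rwa [dotp_zero_right] at this

lemma dotp_le_dualCoord (hN : @IsNorm d N) {k : ℕ} (hk : 1 ≤ k) {z : Fin d → ℝ}
    (hz : coordNorm N k z ≤ 1) (y : Fin d → ℝ) : dotp z y ≤ dualCoord N k y := by
  set D := dualCoord N k y with hD
  rcases eq_or_lt_of_le (dualCoord_nonneg hN k y) with h0 | h0
  · have hy0 : y = 0 := eq_zero_of_dualCoord_eq_zero hN hk h0.symm
    rw [hy0, dotp_zero_right]
    exact dualCoord_nonneg hN k y
  · have hw : dualCoord N k (D⁻¹ • y) ≤ 1 := by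
      calc dualCoord N k (D⁻¹ • y) ≤ D⁻¹ * D := dualCoord_smul_le hN (by positivity) y
      _ = 1 := inv_mul_cancel₀ (ne_of_gt h0)
    have h1 : dotp z (D⁻¹ • y) ≤ 1 := le_trans (le_coordNorm hN hk hw) hz
    rw [dotp_smul_right] at h1
    calc dotp z y = D * (D⁻¹ * dotp z y) := by rw [← mul_assoc, mul_inv_cancel₀ (show D ≠ 0 from ne_of_gt h0), one_mul]
    _ ≤ D * 1 := mul_le_mul_of_nonneg_left h1 h0.le
    _ = D := mul_one D

lemma dualCoord_k_zero (hN : @IsNorm d N) (y : Fin d → ℝ) : dualCoord N 0 y = 0 := by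
  refine le_antisymm (dualCoord_le hN fun K hK => ?_) (dualCoord_nonneg hN 0 y)
  have : K = ∅ := Finset.card_eq_zero.mp (Nat.le_zero.mp hK)
  rw [this, restStar_empty hN]

end Aux

section Main

variable {d : ℕ} {N : (Fin d → ℝ) → ℝ}

lemma capra_zero_left (N : (Fin d → ℝ) → ℝ) (y : Fin d → ℝ) : capra N 0 y = 0 := if_pos rfl

lemma capra_zero_right (N : (Fin d → ℝ) → ℝ) (x : Fin d → ℝ) : capra N x 0 = 0 := by
  unfold capra
  split
  · rfl
  · rw [dotp_zero_right, zero_div]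

lemma ell0_zero : ell0 (0 : Fin d → ℝ) = 0 := by
  simp [ell0, Function.support_zero]

lemma capra_le_dualCoord (hN : @IsNorm d N) {k : ℕ} {x : Fin d → ℝ} (hx : ell0 x ≤ k)
    (y : Fin d → ℝ) : capra N x y ≤ dualCoord N k y := by
  by_cases hx0 : x = 0
  · rw [hx0, capra_zero_left]; exact dualCoord_nonneg hN k y
  have hNx : 0 < N x := hN.pos hx0
  have hfin : (Function.support x).Finite := Set.toFinite _
  set K := hfin.toFinset with hK
  have hcard : K.card ≤ k := by
    rw [← Set.ncard_eq_toFinset_card (Function.support x) hfin]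
    exact hx
  set z : Fin d → ℝ := (N x)⁻¹ • x with hz
  have hz_mem : z ∈ RK K := by
    intro j hj
    have : x j = 0 := by
      by_contra h
      exact hj (hfin.mem_toFinset.mpr h)
    simp [hz, this]
  have hNz : N z = 1 := by
    rw [hz, hN.smul, abs_of_pos (by positivity), inv_mul_cancel₀ (ne_of_gt hNx)]
  have hcap : capra N x y = dotp z (projK K y) := by
    rw [dotp_projK hz_mem, hz, dotp_smul_left, capra, if_neg hx0, div_eq_inv_mul]
  rw [hcap]
  exact le_trans (le_restStar hN hz_mem hNz.le) (le_dualCoord hN hcard y)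

lemma conj_eq (hN : @IsNorm d N) (k : ℕ) :
    capraConj N (indic {x : Fin d → ℝ | ell0 x ≤ k})
      = fun y => ((dualCoord N k y : ℝ) : EReal) := by
  funext y
  set g : (Fin d → ℝ) → EReal :=
    fun x => ((capra N x y : ℝ) : EReal) + (- indic {x : Fin d → ℝ | ell0 x ≤ k} x) with hg
  have hg_mem : ∀ x, ell0 x ≤ k → g x = ((capra N x y : ℝ) : EReal) := by
    intro x hx
    rw [hg]
    simp only [indic, Set.mem_setOf_eq, if_pos hx, neg_zero, add_zero]
  have hg_not : ∀ x, ¬ ell0 x ≤ k → g x = ⊥ := by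
    intro x hx
    rw [hg]
    simp only [indic, Set.mem_setOf_eq, if_neg hx, EReal.neg_top, EReal.add_bot]
  have hub : capraConj N (indic {x : Fin d → ℝ | ell0 x ≤ k}) y
      ≤ ((dualCoord N k y : ℝ) : EReal) := by
    refine iSup_le fun x => ?_
    by_cases hx : ell0 x ≤ k
    · rw [show ((capra N x y : ℝ) : EReal) + (- indic {x : Fin d → ℝ | ell0 x ≤ k} x) = g x
        from rfl, hg_mem x hx]
      exact EReal.coe_le_coe_iff.mpr (capra_le_dualCoord hN hx y)
    · rw [show ((capra N x y : ℝ) : EReal) + (- indic {x : Fin d → ℝ | ell0 x ≤ k} x) = g x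
        from rfl, hg_not x hx]
      exact bot_le
  refine le_antisymm hub ?_
  set S := capraConj N (indic {x : Fin d → ℝ | ell0 x ≤ k}) y with hS
  have hS_iSup : S = ⨆ x, g x := rfl
  have h0 : (0 : EReal) ≤ S := by
    have := le_iSup g 0
    rw [hg_mem 0 (by rw [ell0_zero]; exact Nat.zero_le k), capra_zero_left] at this
    rw [hS_iSup]
    exact_mod_cast this
  have hS_ne_top : S ≠ ⊤ := (lt_of_le_of_lt hub (EReal.coe_lt_top _)).ne
  have hS_ne_bot : S ≠ ⊥ := fun h => by rw [h] at h0; exact absurd h0 (by simp)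
  have hSc : S = ((S.toReal : ℝ) : EReal) := (EReal.coe_toReal hS_ne_top hS_ne_bot).symm
  set c := S.toReal with hc
  have h0c : (0 : ℝ) ≤ c := by
    rw [hSc] at h0
    exact_mod_cast h0
  have hDc : dualCoord N k y ≤ c := by
    refine dualCoord_le hN fun K hK => ?_
    refine restStar_le hN fun x hxK hx1 => ?_
    rw [dotp_projK hxK]
    by_cases hx0 : x = 0
    · rw [hx0, dotp_zero_left]; exact h0c
    have hxL : ell0 x ≤ k := by
      refine le_trans ?_ hK
      have hsub : Function.support x ⊆ ↑K := by
        intro j hj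
        by_contra h
        exact hj (hxK j h)
      calc ell0 x ≤ (↑K : Set (Fin d)).ncard := Set.ncard_le_ncard hsub K.finite_toSet
      _ = K.card := Set.ncard_coe_finset K
    have hcap : capra N x y ≤ c := by
      have h1 := le_iSup g x
      rw [hg_mem x hxL, ← hS_iSup, hSc] at h1
      exact_mod_cast h1
    have hcap_eq : capra N x y = dotp x y / N x := by rw [capra, if_neg hx0]
    rcases le_or_gt (dotp x y) 0 with h | h
    · exact le_trans h h0c
    · have hNx := hN.pos hx0
      have : dotp x y ≤ dotp x y / N x := by
        rw [le_div_iff₀ hNx]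
        nlinarith
      exact le_trans this (by rw [← hcap_eq]; exact hcap)
  rw [hSc]
  exact EReal.coe_le_coe_iff.mpr hDc

end Main

theorem statement15 {d : ℕ} (N : (Fin d → ℝ) → ℝ) (hN : IsNorm N) (k : ℕ) (hk : k ≤ d) :
    capraBiconj N (indic {x : Fin d → ℝ | ell0 x ≤ k})
      = indic (if k = 0 then ({0} : Set (Fin d → ℝ))
               else {x : Fin d → ℝ | coordNorm N k x = N x}) := by
  funext x
  have hconj := conj_eq hN k
  have hterm : ∀ y : Fin d → ℝ,
      ((capra N x y : ℝ) : EReal) + (- capraConj N (indic {x : Fin d → ℝ | ell0 x ≤ k}) y)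
        = (((capra N x y - dualCoord N k y : ℝ)) : EReal) := by
    intro y
    rw [hconj]
    rw [← EReal.coe_neg, ← EReal.coe_add, sub_eq_add_neg]
  have hbic : capraBiconj N (indic {x : Fin d → ℝ | ell0 x ≤ k}) x
      = ⨆ y : Fin d → ℝ, (((capra N x y - dualCoord N k y : ℝ)) : EReal) := by
    unfold capraBiconj
    exact iSup_congr hterm
  rw [hbic]
  by_cases hk0 : k = 0
  · subst hk0
    rw [if_pos rfl]
    simp only [dualCoord_k_zero hN, sub_zero]
    by_cases hx0 : x = 0
    · subst hx0
      simp only [capra_zero_left]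
      rw [indic, if_pos (Set.mem_singleton _)]
      simp
    · rw [indic, if_neg (by simpa using hx0)]
      rw [iSup_eq_top]
      intro b hb
      induction b using EReal.rec with
      | bot => exact ⟨0, by rw [capra_zero_right]; exact EReal.bot_lt_coe 0⟩
      | coe r =>
        have hNx : 0 < N x := hN.pos hx0
        have hQ : 0 < dotp x x := by
          have hne : ∃ i, x i ≠ 0 := by
            by_contra h
            push_neg at h
            exact hx0 (funext h)
          obtain ⟨i, hi⟩ := hne
          refine Finset.sum_pos' (fun j _ => mul_self_nonneg _) ⟨i, Finset.mem_univ i, ?_⟩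
          exact mul_self_pos.mpr hi
        refine ⟨((r + 1) * N x / dotp x x) • x, ?_⟩
        have hcap : capra N x (((r + 1) * N x / dotp x x) • x) = r + 1 := by
          rw [capra, if_neg hx0, dotp_smul_right]
          field_simp
        rw [hcap]
        exact EReal.coe_lt_coe_iff.mpr (lt_add_one r)
      | top => exact absurd hb (lt_irrefl ⊤)
  · rw [if_neg hk0]
    have hk1 : 1 ≤ k := Nat.one_le_iff_ne_zero.mpr hk0
    by_cases hle : coordNorm N k x ≤ N x
    · have heq : coordNorm N k x = N x := le_antisymm hle (N_le_coordNorm hN hk1 x)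
      rw [indic, if_pos (show x ∈ {x | coordNorm N k x = N x} from heq)]
      apply le_antisymm
      · refine iSup_le fun y => ?_
        have hcap : capra N x y ≤ dualCoord N k y := by
          by_cases hx0 : x = 0
          · rw [hx0, capra_zero_left]; exact dualCoord_nonneg hN k y
          · have hNx := hN.pos hx0
            have hz : coordNorm N k ((N x)⁻¹ • x) ≤ 1 := by
              calc coordNorm N k ((N x)⁻¹ • x) ≤ (N x)⁻¹ * coordNorm N k x :=
                    coordNorm_smul_le hN hk1 (by positivity) x
              _ ≤ (N x)⁻¹ * N x := mul_le_mul_of_nonneg_left hle (by positivity)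
              _ = 1 := inv_mul_cancel₀ (ne_of_gt hNx)
            have h1 := dotp_le_dualCoord hN hk1 hz y
            rw [dotp_smul_left] at h1
            rw [capra, if_neg hx0, div_eq_inv_mul]
            exact h1
        have : ((capra N x y - dualCoord N k y : ℝ) : EReal) ≤ ((0 : ℝ) : EReal) :=
          EReal.coe_le_coe_iff.mpr (sub_nonpos.mpr hcap)
        simpa using this
      · have h1 := le_iSup (fun y => (((capra N x y - dualCoord N k y : ℝ)) : EReal)) 0
        rw [capra_zero_right, dualCoord_zero_right hN, sub_zero] at h1
        simpa using h1
    · push_neg at hle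
      rw [indic, if_neg (show x ∉ {x | coordNorm N k x = N x} from ne_of_gt hle)]
      have hx0 : x ≠ 0 := by
        rintro rfl
        rw [coordNorm_zero hN hk1, hN.zero] at hle
        exact lt_irrefl 0 hle
      have hNx := hN.pos hx0
      obtain ⟨y₀, hy₀1, hy₀2⟩ : ∃ y₀, dualCoord N k y₀ ≤ 1 ∧ N x < dotp x y₀ := by
        by_contra h
        push_neg at h
        exact absurd (coordNorm_le hN fun y hy => h y hy) (not_le.mpr hle)
      rw [iSup_eq_top]
      intro b hb
      induction b using EReal.rec with
      | bot =>
        refine ⟨0, ?_⟩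
        rw [capra_zero_right, dualCoord_zero_right hN, sub_zero]
        exact EReal.bot_lt_coe 0
      | coe r =>
        set ε := dotp x y₀ - N x with hε_def
        have hε : 0 < ε := by rw [hε_def]; linarith
        set t := max 0 ((r + 1) * N x / ε) with ht_def
        have ht0 : 0 ≤ t := le_max_left _ _
        refine ⟨t • y₀, ?_⟩
        have hD : dualCoord N k (t • y₀) ≤ t := by
          calc dualCoord N k (t • y₀) ≤ t * dualCoord N k y₀ := dualCoord_smul_le hN ht0 y₀
          _ ≤ t * 1 := mul_le_mul_of_nonneg_left hy₀1 ht0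
          _ = t := mul_one t
        have hcap : capra N x (t • y₀) = t * dotp x y₀ / N x := by
          rw [capra, if_neg hx0, dotp_smul_right]
        rw [EReal.coe_lt_coe_iff]
        have ht2 : (r + 1) * N x / ε ≤ t := le_max_right _ _
        have h5 : (r + 1) * N x ≤ t * ε := by
          rw [div_le_iff₀ hε] at ht2
          linarith
        have h6 : r + 1 ≤ t * ε / N x := by
          rw [le_div_iff₀ hNx]
          linarith
        have h7 : t * dotp x y₀ / N x - t = t * ε / N x := by
          field_simp [hε_def]
          ring
        have h8 : r + 1 ≤ capra N x (t • y₀) - dualCoord N k (t • y₀) := by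
          rw [hcap]
          calc r + 1 ≤ t * ε / N x := h6
          _ = t * dotp x y₀ / N x - t := h7.symm
          _ ≤ t * dotp x y₀ / N x - dualCoord N k (t • y₀) := by linarith
        linarith
      | top => exact absurd hb (lt_irrefl ⊤)
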